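/- Let K be a field such that every polynomial of prime degree in K[x] has a root in K. Then K is algebraically closed. -/

import Mathlib

lemma nt_lemma (S : AddSubmonoid ℕ) (hP : ∀ q : ℕ, q.Prime → q ∉ S)
    {n : ℕ} (hn : n ∈ S) (hn0 : n ≠ 0) :
    ∃ p : ℕ, p.Prime ∧ ∀ m ∈ S, p ∣ m := by
  classical
  set H : AddSubgroup ℤ := AddSubgroup.closure ((↑) '' (S : Set ℕ)) with hH
  obtain ⟨d, hd⟩ := Int.subgroup_cyclic H
  have hdiff : ∀ z ∈ H, ∃ a b : ℕ, a ∈ S ∧ b ∈ S ∧ z = (a : ℤ) - b := by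
    intro z hz
    refine AddSubgroup.closure_induction ?_ ?_ ?_ ?_ hz
    · rintro x ⟨a, ha, rfl⟩; exact ⟨a, 0, ha, S.zero_mem, by simp⟩
    · exact ⟨0, 0, S.zero_mem, S.zero_mem, by simp⟩
    · rintro x y - - ⟨a, b, ha, hb, rfl⟩ ⟨c, e, hc, he, rfl⟩
      exact ⟨a + c, b + e, S.add_mem ha hc, S.add_mem hb he, by push_cast; ring⟩
    · rintro x - ⟨a, b, ha, hb, rfl⟩
      exact ⟨b, a, hb, ha, by ring⟩
  have hdvd : ∀ m ∈ S, (d : ℤ) ∣ (m : ℤ) := by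
    intro m hm
    have hmH : (m : ℤ) ∈ H := AddSubgroup.subset_closure ⟨m, hm, rfl⟩
    rw [hd, AddSubgroup.mem_closure_singleton] at hmH
    obtain ⟨k, hk⟩ := hmH
    exact ⟨k, by rw [← hk]; simp [smul_eq_mul, mul_comm]⟩
  set e := d.natAbs with he
  have hed : ∀ m ∈ S, e ∣ m := by
    intro m hm
    exact_mod_cast (Int.natAbs_dvd.mpr (hdvd m hm))
  have he0 : e ≠ 0 := by
    intro h0
    exact hn0 (Nat.eq_zero_of_zero_dvd (h0 ▸ hed n hn))
  have he1 : e ≠ 1 := by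
    intro h1
    have hdH : d ∈ H := by rw [hd]; exact AddSubgroup.subset_closure rfl
    have h1H : (1 : ℤ) ∈ H := by
      rcases Int.natAbs_eq_iff.mp h1 with h | h
      · rwa [h] at hdH
      · simpa [h] using H.neg_mem hdH
    obtain ⟨a, b, haS, hbS, hab⟩ := hdiff 1 h1H
    have hab' : a = b + 1 := by omega
    by_cases hb : b = 0
    · subst hb
      have h1S : (1 : ℕ) ∈ S := by simpa [hab'] using haS
      exact hP 2 Nat.prime_two (by simpa using S.add_mem h1S h1S)
    · obtain ⟨q, hqb, hq⟩ := Nat.exists_infinite_primes (b * b)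
      have hbpos : 0 < b := Nat.pos_of_ne_zero hb
      set k := q / b with hk
      set r := q % b with hr
      have hrb : r < b := Nat.mod_lt _ hbpos
      have hkb : b ≤ k := Nat.le_div_iff_mul_le hbpos |>.mpr (by nlinarith)
      have hqS : q ∈ S := by
        have hmem : (k - r) * b + r * a ∈ S := by
          have h1 : (k - r) * b ∈ S := by
            simpa [smul_eq_mul] using S.nsmul_mem hbS (k - r)
          have h2 : r * a ∈ S := by
            simpa [smul_eq_mul] using S.nsmul_mem haS r
          exact S.add_mem h1 h2
        have harith : (k - r) * b + r * a = q := by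
          have hdm : k * b + r = q := by
            rw [hk, hr, mul_comm]; exact Nat.div_add_mod q b
          have h3 : (k - r) * b = k * b - r * b := Nat.sub_mul _ _ _
          have h4 : r * a = r * b + r := by rw [hab']; ring
          have h5 : r * b ≤ k * b := Nat.mul_le_mul_right _ (le_of_lt (lt_of_lt_of_le hrb hkb))
          omega
        rwa [harith] at hmem
      exact hP q hq hqS
  refine ⟨e.minFac, Nat.minFac_prime he1, fun m hm => (e.minFac_dvd).trans (hed m hm)⟩

open Polynomial Module IntermediateField

section aux

variable {K : Type} [Field K]

lemma aux_no_root {f : K[X]} (hf : Irreducible f) (hd : f.natDegree ≠ 1) :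
    ∀ x : K, ¬ f.IsRoot x := by
  intro x hx
  have h1 := Polynomial.degree_eq_one_of_irreducible_of_root hf hx
  exact hd (natDegree_eq_of_degree_eq_some h1)

lemma aux_no_prime_irred (h : ∀ f : K[X], f.natDegree.Prime → ∃ x : K, f.IsRoot x)
    {f : K[X]} (hf : Irreducible f) : ¬ f.natDegree.Prime := by
  intro hp
  obtain ⟨x, hx⟩ := h f hp
  exact aux_no_root hf (fun h1 => by rw [h1] at hp; exact Nat.not_prime_one hp) x hx

lemma aux_perfect (h : ∀ f : K[X], f.natDegree.Prime → ∃ x : K, f.IsRoot x) :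
    PerfectField K := by
  obtain ⟨p, hp⟩ := CharP.exists K
  rcases CharP.char_is_prime_or_zero K p with hpp | rfl
  · haveI : Fact p.Prime := ⟨hpp⟩
    haveI : ExpChar K p := ExpChar.prime hpp
    haveI : PerfectRing K p := by
      refine PerfectRing.ofSurjective K p fun y => ?_
      obtain ⟨x, hx⟩ := h (X ^ p - C y) (by rwa [natDegree_X_pow_sub_C])
      refine ⟨x, ?_⟩
      have hx' : x ^ p - y = 0 := by simpa [IsRoot] using hx
      simpa [frobenius_def] using sub_eq_zero.mp hx'
    exact PerfectRing.toPerfectField K p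
  · haveI := CharP.charP_to_charZero K
    infer_instance

lemma aux_deg_lemma {M : Type} [Field M] [Algebra K M] [FiniteDimensional K M]
    [Algebra.IsSeparable K M] (E : IntermediateField K M) :
    ∃ g : K[X], g.Monic ∧ Irreducible g ∧ g.natDegree = finrank K E := by
  haveI : Algebra.IsSeparable K E := Algebra.isSeparable_tower_bot_of_isSeparable K E M
  obtain ⟨α, hα⟩ := Field.exists_primitive_element K E
  have hint : IsIntegral K α := IsIntegral.of_finite K α
  refine ⟨minpoly K α, minpoly.monic hint, minpoly.irreducible hint, ?_⟩
  rw [← IntermediateField.adjoin.finrank hint, hα, IntermediateField.finrank_top']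

lemma aux_finrank_fixedField {M : Type} [Field M] [Algebra K M] [FiniteDimensional K M]
    [IsGalois K M] (H : Subgroup (M ≃ₐ[K] M)) :
    finrank K (IntermediateField.fixedField H) = H.index := by
  classical
  have h1 : finrank (IntermediateField.fixedField H) M = Fintype.card H :=
    (IntermediateField.finrank_fixedField_eq_card H).trans Nat.card_eq_fintype_card
  have h2 : finrank K (IntermediateField.fixedField H) *
      finrank (IntermediateField.fixedField H) M = finrank K M :=
    finrank_mul_finrank K (IntermediateField.fixedField H) M
  have h3 : Fintype.card (M ≃ₐ[K] M) = finrank K M := Nat.card_eq_fintype_card.symm.trans (IsGalois.card_aut_eq_finrank K M)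
  have h4 : H.index * Nat.card H = Nat.card (M ≃ₐ[K] M) := H.index_mul_card
  rw [Nat.card_eq_fintype_card, Nat.card_eq_fintype_card, h3] at h4
  rw [h1] at h2
  have hc : 0 < Fintype.card H := Fintype.card_pos
  exact Nat.eq_of_mul_eq_mul_right hc (h2.trans h4.symm)

end aux

theorem prime_degree_root_implies_algClosed (K : Type) [Field K]
    (h : ∀ f : Polynomial K, f.natDegree.Prime → ∃ x : K, f.IsRoot x) :
    IsAlgClosed K := by
  classical
  have key : ∀ f : K[X], Irreducible f → f.natDegree = 1 := by
    by_contra hk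
    push_neg at hk
    obtain ⟨f₀, hf₀, hdeg1⟩ := hk
    have hd2 : 1 < f₀.natDegree := lt_of_le_of_ne hf₀.natDegree_pos (Ne.symm hdeg1)
    haveI : PerfectField K := aux_perfect h
    -- the additive submonoid of degrees of monic root-free polynomials
    set S : AddSubmonoid ℕ :=
      { carrier := {n | ∃ f : K[X], f.Monic ∧ (∀ x : K, ¬ f.IsRoot x) ∧ f.natDegree = n}
        zero_mem' := ⟨1, monic_one, by simp [IsRoot], natDegree_one⟩
        add_mem' := by
          rintro a b ⟨f, hf, hfr, rfl⟩ ⟨g, hg, hgr, rfl⟩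
          refine ⟨f * g, hf.mul hg, ?_, hf.natDegree_mul hg⟩
          intro x hx
          rcases (by simpa [IsRoot, eval_mul] using hx : eval x f = 0 ∨ eval x g = 0) with h1 | h1
          exacts [hfr x h1, hgr x h1] } with hS
    have hSnp : ∀ q : ℕ, q.Prime → q ∉ S := by
      rintro q hq ⟨f, hfm, hfr, hfd⟩
      obtain ⟨x, hx⟩ := h f (hfd ▸ hq)
      exact hfr x hx
    -- membership of degrees of irreducibles of degree > 1
    have hmem : ∀ g : K[X], Irreducible g → g.natDegree ≠ 1 → g.natDegree ∈ S := by
      intro g hg hgd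
      refine ⟨g * C g.leadingCoeff⁻¹, monic_mul_leadingCoeff_inv hg.ne_zero, ?_, ?_⟩
      · intro x hx
        have hlc : g.leadingCoeff ≠ 0 := leadingCoeff_ne_zero.mpr hg.ne_zero
        have : g.eval x * g.leadingCoeff⁻¹ = 0 := by simpa [IsRoot] using hx
        rcases mul_eq_zero.mp this with h1 | h1
        · exact aux_no_root hg hgd x h1
        · exact hlc (by simpa using inv_eq_zero.mp h1)
      · rw [natDegree_mul_C (inv_ne_zero (leadingCoeff_ne_zero.mpr hg.ne_zero))]
    have hnS : f₀.natDegree ∈ S := hmem f₀ hf₀ hdeg1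
    obtain ⟨p, hp, hpdvd⟩ := nt_lemma S hSnp hnS (by omega)
    haveI : Fact p.Prime := ⟨hp⟩
    -- splitting field
    set M := f₀.SplittingField with hM
    have hsep : f₀.Separable := PerfectField.separable_of_irreducible hf₀
    haveI : IsGalois K M := IsGalois.of_separable_splitting_field hsep
    -- dichotomy for intermediate fields
    have hdich : ∀ E : IntermediateField K M, finrank K E = 1 ∨ p ∣ finrank K E := by
      intro E
      obtain ⟨g, hgm, hgi, hgd⟩ := aux_deg_lemma E
      by_cases h1 : g.natDegree = 1
      · exact Or.inl (hgd ▸ h1)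
      · exact Or.inr (hgd ▸ hpdvd _ (hmem g hgi h1))
    -- p divides the finrank of M
    have hroot : ∃ α : M, (aeval α) f₀ = 0 := by
      have hd0 : f₀.degree ≠ 0 := by
        rw [degree_eq_natDegree hf₀.ne_zero]
        exact_mod_cast (by omega : f₀.natDegree ≠ 0)
      obtain ⟨α, hα⟩ := Splits.exists_eval_eq_zero
        (SplittingField.splits f₀) (by rwa [degree_map])
      exact ⟨α, by rwa [aeval_def, ← eval_map]⟩
    obtain ⟨α, hα⟩ := hroot
    have hminp : (minpoly K α).natDegree = f₀.natDegree := by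
      have hdvd : minpoly K α ∣ f₀ := minpoly.dvd K α hα
      have hassoc := (minpoly.irreducible (IsIntegral.of_finite K α)).associated_of_dvd hf₀ hdvd
      exact natDegree_eq_of_degree_eq (degree_eq_degree_of_associated hassoc)
    have hpM : p ∣ finrank K M := by
      have h1 : finrank K K⟮α⟯ * finrank K⟮α⟯ M = finrank K M :=
        finrank_mul_finrank K K⟮α⟯ M
      have h2 : finrank K K⟮α⟯ = f₀.natDegree := by
        rw [IntermediateField.adjoin.finrank (IsIntegral.of_finite K α), hminp]
      have h3 : p ∣ f₀.natDegree := hpdvd _ hnS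
      exact h1 ▸ Dvd.dvd.mul_right (h2 ▸ h3) _
    -- Sylow argument
    set G := M ≃ₐ[K] M with hG
    have hcardG : Fintype.card G = finrank K M := Nat.card_eq_fintype_card.symm.trans (IsGalois.card_aut_eq_finrank K M)
    obtain ⟨P⟩ : Nonempty (Sylow p G) := inferInstance
    have hPindex : finrank K (IntermediateField.fixedField (P : Subgroup G)) =
        (P : Subgroup G).index := aux_finrank_fixedField _
    have hnd : ¬ p ∣ (P : Subgroup G).index := P.not_dvd_index
    have hPtop : (P : Subgroup G) = ⊤ := by
      rcases hdich (IntermediateField.fixedField (P : Subgroup G)) with h1 | h1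
      · exact Subgroup.index_eq_one.mp (by rw [← hPindex, h1])
      · exact absurd (hPindex ▸ h1) hnd
    have hpg : IsPGroup p G := by
      have := P.2
      rw [hPtop] at this
      exact this.of_equiv Subgroup.topEquiv
    obtain ⟨k, hk⟩ := (IsPGroup.iff_card (p := p) (G := G)).mp hpg
    have hk1 : 1 ≤ k := by
      rcases Nat.eq_zero_or_pos k with rfl | h1
      · exfalso
        have : p ∣ Nat.card G := by
          rwa [Nat.card_eq_fintype_card, hcardG]
        rw [hk] at this
        simpa using Nat.le_of_dvd one_pos this |>.not_gt hp.one_lt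
      · exact h1
    obtain ⟨H, hH⟩ := Sylow.exists_subgroup_card_pow_prime p
      (show p ^ (k - 1) ∣ Nat.card G by rw [hk]; exact pow_dvd_pow p (by omega))
    have hHindex : H.index = p := by
      have h4 : H.index * Nat.card H = Nat.card G := H.index_mul_card
      rw [hH, hk] at h4
      have hpow : p ^ k = p * p ^ (k - 1) := by
        rw [← pow_succ']; congr 1; omega
      rw [hpow] at h4
      exact Nat.eq_of_mul_eq_mul_right (pow_pos hp.pos _) h4
    have hEp : finrank K (IntermediateField.fixedField H) = p :=
      (aux_finrank_fixedField H).trans hHindex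
    obtain ⟨g, hgm, hgi, hgd⟩ := aux_deg_lemma (IntermediateField.fixedField H)
    exact aux_no_prime_irred h hgi (by rwa [hgd, hEp])
  -- conclude
  apply IsAlgClosed.of_exists_root
  intro q hqm hqi
  have hq1 : q.natDegree = 1 := key q hqi
  refine ⟨-q.coeff 0, ?_⟩
  have := hqm.eq_X_add_C hq1
  rw [this]
  simp
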